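/- On ℝ³ with coordinates (y₁,y₂,y₃), let X₁ = ∂_{y₁} + y₂∂_{y₃}, X₂ = ∂_{y₂}, X₃ = ∂_{y₃}. For any constants C₁, C₂, the triple of functions w₂ = 0, w₃ = C₁e^{y₁}, w₄ = (C₁/2)e^{y₁} + C₂e^{−y₁} satisfies: X₁w₂ − (1/3)(X₁w₂+X₂w₃+X₃w₄) = 0; X₁w₃ − w₃ = 0; X₁w₄ + w₄ − w₃ = 0; X₂w₂ = 0; X₂w₃ − w₂ − (1/3)(X₁w₂+X₂w₃+X₃w₄) = 0; X₂w₄ = 0; X₃w₂ = 0; X₃w₃ = 0. -/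

import Mathlib

noncomputable section

abbrev Pt3 := Fin 3 → ℝ

/-- The frame X₁ = ∂_{y₁} + y₂∂_{y₃}, X₂ = ∂_{y₂}, X₃ = ∂_{y₃}. -/
def Xvf : Fin 3 → Pt3 → Pt3
  | 0 => fun p => ![1, 0, p 1]
  | 1 => fun _ => ![0, 1, 0]
  | 2 => fun _ => ![0, 0, 1]

/-- Directional derivative of a function along the vector field Xᵢ. -/
def Dvf (i : Fin 3) (f : Pt3 → ℝ) : Pt3 → ℝ :=
  fun p => fderiv ℝ f p (Xvf i p)

def proj0 : Pt3 →L[ℝ] ℝ := ContinuousLinearMap.proj 0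

lemma hexp (c : ℝ) (p : Pt3) :
    HasFDerivAt (fun q : Pt3 => c * Real.exp (q 0))
      ((c * Real.exp (p 0)) • proj0) p := by
  have h1 : HasFDerivAt (fun q : Pt3 => q 0) proj0 p := proj0.hasFDerivAt
  have h2 := (Real.hasDerivAt_exp (p 0)).comp_hasFDerivAt p h1
  have h3 := h2.const_mul c
  refine h3.congr_fderiv ?_
  ext v
  simp [mul_assoc]

lemma hexpneg (c : ℝ) (p : Pt3) :
    HasFDerivAt (fun q : Pt3 => c * Real.exp (-(q 0)))
      ((-(c * Real.exp (-(p 0)))) • proj0) p := by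
  have h1 : HasFDerivAt (fun q : Pt3 => -(q 0)) (-proj0) p :=
    proj0.hasFDerivAt.neg
  have h2 := (Real.hasDerivAt_exp (-(p 0))).comp_hasFDerivAt p h1
  have h3 := h2.const_mul c
  refine h3.congr_fderiv ?_
  ext v
  simp
  ring

lemma fd_exp (c : ℝ) (p : Pt3) (v : Pt3) :
    fderiv ℝ (fun q : Pt3 => c * Real.exp (q 0)) p v = c * Real.exp (p 0) * v 0 := by
  rw [(hexp c p).fderiv]
  simp [proj0]

lemma fd_w4 (c d : ℝ) (p : Pt3) (v : Pt3) :
    fderiv ℝ (fun q : Pt3 => c * Real.exp (q 0) + d * Real.exp (-(q 0))) p v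
      = (c * Real.exp (p 0) - d * Real.exp (-(p 0))) * v 0 := by
  rw [show (fun q : Pt3 => c * Real.exp (q 0) + d * Real.exp (-(q 0))) = (fun q : Pt3 => c * Real.exp (q 0)) + (fun q : Pt3 => d * Real.exp (-(q 0))) from rfl,
    ((hexp c p).add (hexpneg d p)).fderiv]
  simp [proj0]
  ring

theorem stmt6 (C1 C2 : ℝ) :
    let w2 : Pt3 → ℝ := fun _ => 0
    let w3 : Pt3 → ℝ := fun p => C1 * Real.exp (p 0)
    let w4 : Pt3 → ℝ := fun p => (C1 / 2) * Real.exp (p 0) + C2 * Real.exp (-(p 0))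
    (∀ p, Dvf 0 w2 p - (1/3) * (Dvf 0 w2 p + Dvf 1 w3 p + Dvf 2 w4 p) = 0) ∧
    (∀ p, Dvf 0 w3 p - w3 p = 0) ∧
    (∀ p, Dvf 0 w4 p + w4 p - w3 p = 0) ∧
    (∀ p, Dvf 1 w2 p = 0) ∧
    (∀ p, Dvf 1 w3 p - w2 p - (1/3) * (Dvf 0 w2 p + Dvf 1 w3 p + Dvf 2 w4 p) = 0) ∧
    (∀ p, Dvf 1 w4 p = 0) ∧
    (∀ p, Dvf 2 w2 p = 0) ∧
    (∀ p, Dvf 2 w3 p = 0) := by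
  intro w2 w3 w4
  have h2 : ∀ i p, Dvf i w2 p = 0 := by
    intro i p
    simp [Dvf, w2, fderiv_const]
  have h3 : ∀ i p, Dvf i w3 p = C1 * Real.exp (p 0) * (Xvf i p) 0 := by
    intro i p
    simp only [Dvf, w3, fd_exp]
  have h4 : ∀ i p, Dvf i w4 p
      = (C1 / 2 * Real.exp (p 0) - C2 * Real.exp (-(p 0))) * (Xvf i p) 0 := by
    intro i p
    simp only [Dvf, w4, fd_w4]
  refine ⟨?_, ?_, ?_, ?_, ?_, ?_, ?_, ?_⟩ <;> intro p <;>
    simp [h2, h3, h4, w2, w3, w4, Xvf] <;> ring
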